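/- Let w be a complex number with |w| = 1, set z = 1 − w⁴, and let ω be a fourth root of unity at minimal distance to w, i.e. |ω − w| = min_{0≤k≤3} |e^{2kπi/4} − w|. Then: (a) if 1 ≤ |z| < 2, then |ω − w| ≤ (π/8)·|z|; (b) if 0 < |z| < 1, then |ω − w| < (π/12)·|z|. -/

import Mathlib

private lemma aux_normSq_pow4 (v : ℂ) (h : v.re^2 + v.im^2 = 1) :
    Complex.normSq (1 - v^4) = 16*v.re^2*(1-v.re^2) := by
  simp only [Complex.normSq_apply, Complex.sub_re, Complex.sub_im, Complex.one_re,
    Complex.one_im, pow_succ, pow_zero, one_mul, Complex.mul_re, Complex.mul_im]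
  ring_nf
  linear_combination ((v.re^2+v.im^2-1)*((v.re^2+v.im^2)+1)^2 + 16*v.re^2) * h



set_option maxHeartbeats 2000000 in
private lemma aux_main (t Z c : ℝ) (ht0 : 0 ≤ t) (hz0 : 0 ≤ Z)
    (hc7 : c ≥ 0.7071) (hc2 : c^2 ≥ 1/2) (hcle : c ≤ 1)
    (ht2 : t^2 = 2 - 2*c) (hz2 : Z^2 = 16*c^2*(1-c^2)) :
    (1 ≤ Z → Z < 2 → t ≤ Real.pi/8 * Z) ∧ (0 < Z → Z < 1 → t < Real.pi/12 * Z) := by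
  have hpi : Real.pi > 3.141592 := Real.pi_gt_d6
  have e1 : Real.pi^2 ≥ 9.8696 := by nlinarith [hpi]
  constructor
  · intro h1 h2
    have key : t^2 ≤ (Real.pi/8 * Z)^2 := by
      have e2 : Real.pi^2 * c^2 ≥ 4.9348 := by nlinarith [e1, hc2]
      have h8 : Real.pi^2 * c^2 * (1+c) ≥ 8 := by
        nlinarith [e2, hc7, mul_nonneg (by linarith : (0:ℝ) ≤ Real.pi^2*c^2 - 4.9348)
          (by linarith : (0:ℝ) ≤ c - 0.7071)]
      have hmul8 : (Real.pi^2 * c^2 * (1+c) - 8) * (1 - c) ≥ 0 :=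
        mul_nonneg (by linarith) (by linarith)
      rw [mul_pow, ht2, hz2]
      nlinarith [hmul8]
    nlinarith [key, ht0, mul_nonneg (by positivity : (0:ℝ) ≤ Real.pi/8) hz0]
  · intro h1 h2
    have hz2lt : 16 * c^2 * (1 - c^2) < 1 := by nlinarith [hz2, h2, hz0]
    have hz2gt : 0 < 16 * c^2 * (1 - c^2) := by nlinarith [hz2, h1]
    have hcc : 1 - c^2 > 0 := by nlinarith [hz2gt, sq_nonneg c]
    have hclt : c < 1 := by nlinarith [hcc, sq_nonneg (c-1)]
    have h85 : c^2 * (1+c) ≥ 0.8535 := by nlinarith [hc7, sq_nonneg (c - 0.7071)]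
    have hs1 : c > 0.9267 := by
      nlinarith [mul_nonneg (by linarith : (0:ℝ) ≤ c^2*(1+c) - 0.8535)
        (by linarith : (0:ℝ) ≤ 1 - c), hz2lt]
    have h2a : c^2 * (1+c) ≥ 1.6546 := by nlinarith [hs1, sq_nonneg (c - 0.9267)]
    have hs2 : c > 0.96222 := by
      nlinarith [mul_nonneg (by linarith : (0:ℝ) ≤ c^2*(1+c) - 1.6546)
        (by linarith : (0:ℝ) ≤ 1 - c), hz2lt]
    have h3a : c^2 * (1+c) ≥ 1.8167 := by nlinarith [hs2, sq_nonneg (c - 0.96222)]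
    have hs3 : c > 0.96559 := by
      nlinarith [mul_nonneg (by linarith : (0:ℝ) ≤ c^2*(1+c) - 1.8167)
        (by linarith : (0:ℝ) ≤ 1 - c), hz2lt]
    have h4a : c^2 * (1+c) ≥ 1.8326 := by nlinarith [hs3, sq_nonneg (c - 0.96559)]
    have key : t^2 < (Real.pi/12 * Z)^2 := by
      have h18 : Real.pi^2 * (c^2 * (1+c)) > 18 := by
        nlinarith [e1, h4a, mul_nonneg (by linarith : (0:ℝ) ≤ Real.pi^2 - 9.8696)
          (by linarith : (0:ℝ) ≤ c^2*(1+c) - 1.8326)]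
      have hmulx : (Real.pi^2 * (c^2*(1+c)) - 18) * (1 - c) > 0 :=
        mul_pos (by linarith) (by linarith)
      rw [mul_pow, ht2, hz2]
      nlinarith [hmulx]
    have hrhs : 0 < Real.pi/12 * Z := by positivity
    nlinarith [key, ht0, hrhs]

/-- Lemma 6.1: let `w` be a complex number of modulus 1, `z = 1 - w⁴`, and `ω` a fourth
root of unity at minimal distance from `w`.  If `1 ≤ |z| < 2` then `|ω - w| ≤ (π/8)|z|`,
and if `0 < |z| < 1` then `|ω - w| < (π/12)|z|`. -/
theorem fourth_root_of_unity_gap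
    (w z ω : ℂ) (hw : ‖w‖ = 1) (hz : z = 1 - w^4)
    (hω : ω^4 = 1)
    (hmin : ∀ ω' : ℂ, ω'^4 = 1 → ‖ω - w‖ ≤ ‖ω' - w‖) :
    (1 ≤ ‖z‖ → ‖z‖ < 2 →
      ‖ω - w‖ ≤ Real.pi/8 * ‖z‖) ∧
    (0 < ‖z‖ → ‖z‖ < 1 →
      ‖ω - w‖ < Real.pi/12 * ‖z‖) := by
  have hωa : ‖ω‖ = 1 := by
    have h4 : ‖ω‖ ^ 4 = 1 := by rw [← norm_pow, hω, norm_one]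
    have h0 : 0 ≤ ‖ω‖ := norm_nonneg _
    nlinarith [h4, h0, sq_nonneg (‖ω‖), sq_nonneg (‖ω‖ - 1),
      sq_nonneg (‖ω‖ + 1), sq_nonneg (‖ω‖ ^ 2 - 1)]
  have hnω : Complex.normSq ω = 1 := by
    rw [Complex.normSq_eq_norm_sq, hωa]; norm_num
  have hωu : ω * (starRingEnd ℂ) ω = 1 := by
    rw [Complex.mul_conj, hnω]; norm_num
  set u : ℂ := (starRingEnd ℂ) ω * w with hu
  have hmul : ω * (1 - u) = ω - w := by
    rw [hu, mul_sub, mul_one, ← mul_assoc, hωu, one_mul]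
  have habs : ‖ω - w‖ = ‖1 - u‖ := by
    rw [← hmul, norm_mul, hωa, one_mul]
  have hu4 : u ^ 4 = w ^ 4 := by
    rw [hu, mul_pow, ← map_pow, hω, map_one, one_mul]
  have hua : ‖u‖ = 1 := by
    rw [hu, norm_mul, Complex.norm_conj, hωa, hw, one_mul]
  have hcd : u.re ^ 2 + u.im ^ 2 = 1 := by
    have h := Complex.sq_norm u
    rw [hua] at h
    simp only [Complex.normSq_apply, one_pow] at h
    linear_combination -h
  have hineq : ∀ ζ : ℂ, ζ ^ 4 = 1 → ‖1 - u‖ ≤ ‖ζ - u‖ := by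
    intro ζ hζ
    have h1 : (ζ * ω) ^ 4 = 1 := by rw [mul_pow, hζ, hω, one_mul]
    have h2 := hmin (ζ * ω) h1
    have h3 : ω * (ζ - u) = ζ * ω - w := by
      rw [hu, mul_sub, ← mul_assoc, hωu, one_mul, mul_comm]
    rw [habs] at h2
    calc ‖1 - u‖ ≤ ‖ζ * ω - w‖ := h2
      _ = ‖ζ - u‖ := by rw [← h3, norm_mul, hωa, one_mul]
  have hsq : ∀ ζ : ℂ, ζ ^ 4 = 1 → Complex.normSq (1 - u) ≤ Complex.normSq (ζ - u) := by
    intro ζ hζ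
    have h := hineq ζ hζ
    have h0 : 0 ≤ ‖1 - u‖ := norm_nonneg _
    rw [← Complex.sq_norm, ← Complex.sq_norm]
    nlinarith [h, h0]
  have hI : (Complex.I) ^ 4 = 1 := by
    rw [show (4:ℕ) = 2*2 by norm_num, pow_mul, Complex.I_sq]; norm_num
  have hd1 : u.re ≥ u.im := by
    have h := hsq Complex.I hI
    simp only [Complex.normSq_apply, Complex.sub_re, Complex.sub_im, Complex.one_re,
      Complex.one_im, Complex.I_re, Complex.I_im] at h
    nlinarith [h]
  have hd2 : u.re ≥ -u.im := by
    have hmI : (-Complex.I) ^ 4 = 1 := by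
      rw [show (-Complex.I)^4 = Complex.I^4 by ring, hI]
    have h := hsq (-Complex.I) hmI
    simp only [Complex.normSq_apply, Complex.sub_re, Complex.sub_im, Complex.one_re,
      Complex.one_im, Complex.neg_re, Complex.neg_im, Complex.I_re, Complex.I_im] at h
    nlinarith [h]
  have hd3 : u.re ≥ 0 := by linarith
  have hc2 : u.re ^ 2 ≥ 1/2 := by
    rcases le_or_gt 0 u.im with h | h
    · nlinarith [hd1, hcd]
    · nlinarith [hd2, hcd]
  have hc7 : u.re ≥ 0.7071 := by nlinarith [hc2, hd3]
  have hcle : u.re ≤ 1 := by nlinarith [hcd, sq_nonneg u.im]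
  have hz2 : ‖z‖ ^ 2 = 16 * u.re^2 * (1 - u.re^2) := by
    rw [hz, ← hu4, Complex.sq_norm, aux_normSq_pow4 u hcd]
  have ht2 : ‖ω - w‖ ^ 2 = 2 - 2 * u.re := by
    rw [habs, Complex.sq_norm]
    simp only [Complex.normSq_apply, Complex.sub_re, Complex.sub_im, Complex.one_re,
      Complex.one_im]
    linear_combination hcd
  have ht0 : 0 ≤ ‖ω - w‖ := norm_nonneg _
  have hz0 : 0 ≤ ‖z‖ := norm_nonneg _
  exact aux_main _ _ _ ht0 hz0 hc7 hc2 hcle ht2 hz2
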